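/- Let q be a prime power, let 2 ≤ k ≤ n, let s_1 = 1 and s_2 = k−1, and let G = [I_k | P] ∈ F_q^{k×n} be a systematic matrix in which every k columns are linearly independent (a systematic [n,k] MDS code). Then E_1(G) = k, independently of n. Equivalently, n·(H_n − H_{n−k}) − Σ_{s=1}^{k−1} s/(n−s) = k. -/

import Mathlib

open Finset

/-- The `r`-th harmonic number `H_r = ∑_{i=1}^r 1/i`, as a real number (`H_0 = 0`). -/
noncomputable def harm (r : ℕ) : ℝ := ∑ i ∈ Finset.range r, (1 : ℝ) / (i + 1)

/-- The span of the columns of `G` indexed by the subset `S ⊆ {1,…,n}`. -/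
noncomputable def colSpan (F : Type*) [Field F] {k n : ℕ}
    (G : Matrix (Fin k) (Fin n) F) (S : Finset (Fin n)) : Submodule F (Fin k → F) :=
  Submodule.span F ((fun j => fun i => G i j) '' (S : Set (Fin n)))

/-- `α_V(s)`: the number of `s`-element subsets `S ⊆ {1,…,n}` whose columns span a
subspace containing the target subspace `V`. -/
noncomputable def alphaCount (F : Type*) [Field F] {k n : ℕ}
    (G : Matrix (Fin k) (Fin n) F) (V : Submodule F (Fin k → F)) (s : ℕ) : ℕ :=
  Nat.card {S : Finset (Fin n) // S.card = s ∧ V ≤ colSpan F G S}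

/-- The first file subspace `F₁ = span(e_1, …, e_{s₁}) ⊆ F_q^k`. -/
noncomputable def file1 (F : Type*) [Field F] (k s1 : ℕ) : Submodule F (Fin k → F) :=
  Submodule.span F {v : Fin k → F | ∃ i : Fin k, (i : ℕ) < s1 ∧ v = Pi.single i 1}

/-- The second file subspace `F₂ = span(e_{s₁+1}, …, e_k) ⊆ F_q^k`. -/
noncomputable def file2 (F : Type*) [Field F] (k s1 : ℕ) : Submodule F (Fin k → F) :=
  Submodule.span F {v : Fin k → F | ∃ i : Fin k, s1 ≤ (i : ℕ) ∧ v = Pi.single i 1}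

/-- The expected retrieval time `E(G, V) = n·H_n − ∑_{s=1}^{n−1} α_V(s)/C(n−1,s)`. -/
noncomputable def Etime (F : Type*) [Field F] {k n : ℕ}
    (G : Matrix (Fin k) (Fin n) F) (V : Submodule F (Fin k → F)) : ℝ :=
  (n : ℝ) * harm n -
    ∑ s ∈ Finset.Icc 1 (n - 1), (alphaCount F G V s : ℝ) / ((n - 1).choose s : ℝ)

-- span of ≥ k MDS columns is everything
lemma colSpan_eq_top {F : Type*} [Field F] {k n : ℕ} (G : Matrix (Fin k) (Fin n) F)
    (hk : 0 < k)
    (hMDS : ∀ S : Finset (Fin n), S.card = k →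
      LinearIndependent F (fun j : {x : Fin n // x ∈ S} => fun i => G i j.1))
    (S : Finset (Fin n)) (hS : k ≤ S.card) : colSpan F G S = ⊤ := by
  classical
  obtain ⟨T, hTS, hTcard⟩ := S.exists_subset_card_eq hS
  have li := hMDS T hTcard
  have hne : T.Nonempty := Finset.card_pos.mp (by omega)
  haveI : Nonempty {x : Fin n // x ∈ T} := ⟨⟨hne.choose, hne.choose_spec⟩⟩
  have hcard : Fintype.card {x : Fin n // x ∈ T} = Module.finrank F (Fin k → F) := by
    simp [Fintype.card_coe, hTcard, Module.finrank_fin_fun]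
  have htop := li.span_eq_top_of_card_eq_finrank hcard
  have himg : (fun j => fun i => G i j) '' (T : Set (Fin n)) =
      Set.range (fun j : {x : Fin n // x ∈ T} => fun i => G i j.1) := by
    rw [Set.image_eq_range]; rfl
  rw [eq_top_iff, ← htop, ← himg]
  exact Submodule.span_mono (Set.image_mono (by exact_mod_cast hTS))

lemma alpha_high {F : Type*} [Field F] {k n : ℕ} (G : Matrix (Fin k) (Fin n) F)
    (hk : 0 < k)
    (hMDS : ∀ S : Finset (Fin n), S.card = k →
      LinearIndependent F (fun j : {x : Fin n // x ∈ S} => fun i => G i j.1))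
    (s : ℕ) (hs : k ≤ s) :
    alphaCount F G (file1 F k 1) s = n.choose s := by
  classical
  have key : ∀ S : Finset (Fin n),
      (S.card = s ∧ file1 F k 1 ≤ colSpan F G S) ↔ S.card = s := fun S =>
    ⟨And.left, fun h => ⟨h, by
      rw [colSpan_eq_top G hk hMDS S (by omega)]; exact le_top⟩⟩
  unfold alphaCount
  rw [Nat.card_congr (Equiv.subtypeEquivRight key), Nat.card_eq_fintype_card,
    Fintype.card_finset_len, Fintype.card_fin]

lemma col_zero {F : Type*} [Field F] {k n : ℕ} (G : Matrix (Fin k) (Fin n) F)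
    (hk : 0 < k) (hn : 0 < n)
    (hsys : ∀ (i : Fin k) (j : Fin n), (j : ℕ) < k →
      G i j = if (i : ℕ) = (j : ℕ) then 1 else 0) :
    (fun i : Fin k => G i ⟨0, hn⟩) = Pi.single (⟨0, hk⟩ : Fin k) 1 := by
  funext i
  rw [hsys i ⟨0, hn⟩ (by simpa using hk)]
  simp [Pi.single_apply, Fin.ext_iff]

lemma file1_le_iff {F : Type*} [Field F] {k : ℕ} (hk : 0 < k)
    (W : Submodule F (Fin k → F)) :
    file1 F k 1 ≤ W ↔ Pi.single (⟨0, hk⟩ : Fin k) 1 ∈ W := by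
  unfold file1
  rw [Submodule.span_le]
  constructor
  · intro h; exact h ⟨⟨0, hk⟩, by simp, rfl⟩
  · rintro h v ⟨i, hi, rfl⟩
    have hi0 : i = ⟨0, hk⟩ := by
      rw [Fin.ext_iff]; simpa using hi
    rwa [hi0]

lemma mem_colSpan_low {F : Type*} [Field F] {k n : ℕ} (G : Matrix (Fin k) (Fin n) F)
    (hkn : k ≤ n) (hn : 0 < n)
    (hMDS : ∀ S : Finset (Fin n), S.card = k →
      LinearIndependent F (fun j : {x : Fin n // x ∈ S} => fun i => G i j.1))
    (S : Finset (Fin n)) (hS : S.card < k) :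
    (fun i : Fin k => G i ⟨0, hn⟩) ∈ colSpan F G S ↔ (⟨0, hn⟩ : Fin n) ∈ S := by
  classical
  constructor
  · intro h
    by_contra hj
    have hins : (insert (⟨0, hn⟩ : Fin n) S).card ≤ k := by
      rw [Finset.card_insert_of_notMem hj]; omega
    obtain ⟨T, hsub, hTu, hTcard⟩ := Finset.exists_subsuperset_card_eq
      (Finset.subset_univ (insert (⟨0, hn⟩ : Fin n) S)) hins
      (by simpa [Finset.card_univ] using hkn)
    have li := hMDS T hTcard
    have hj0T : (⟨0, hn⟩ : Fin n) ∈ T := hsub (Finset.mem_insert_self _ _)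
    have hnm := li.notMem_span_image
      (s := {x : {x : Fin n // x ∈ T} | x.1 ∈ S})
      (x := ⟨⟨0, hn⟩, hj0T⟩) (by exact hj)
    apply hnm
    refine Submodule.span_mono ?_ h
    rintro v ⟨j, hjS, rfl⟩
    exact ⟨⟨j, hsub (Finset.mem_insert_of_mem hjS)⟩, hjS, rfl⟩
  · intro h
    exact Submodule.subset_span ⟨⟨0, hn⟩, h, rfl⟩

lemma alpha_low {F : Type*} [Field F] {k n : ℕ} (G : Matrix (Fin k) (Fin n) F)
    (hk2 : 2 ≤ k) (hkn : k ≤ n)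
    (hsys : ∀ (i : Fin k) (j : Fin n), (j : ℕ) < k →
      G i j = if (i : ℕ) = (j : ℕ) then 1 else 0)
    (hMDS : ∀ S : Finset (Fin n), S.card = k →
      LinearIndependent F (fun j : {x : Fin n // x ∈ S} => fun i => G i j.1))
    (s : ℕ) (hs1 : 1 ≤ s) (hsk : s ≤ k - 1) :
    alphaCount F G (file1 F k 1) s = (n - 1).choose (s - 1) := by
  classical
  have hn : 0 < n := by omega
  have hk : 0 < k := by omega
  have key : ∀ S : Finset (Fin n),
      (S.card = s ∧ file1 F k 1 ≤ colSpan F G S) ↔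
        (S.card = s ∧ (⟨0, hn⟩ : Fin n) ∈ S) := by
    intro S
    constructor
    · rintro ⟨hc, hle⟩
      refine ⟨hc, ?_⟩
      rw [file1_le_iff hk, ← col_zero G hk hn hsys] at hle
      exact (mem_colSpan_low G hkn hn hMDS S (by omega)).mp hle
    · rintro ⟨hc, hmem⟩
      refine ⟨hc, ?_⟩
      rw [file1_le_iff hk, ← col_zero G hk hn hsys]
      exact (mem_colSpan_low G hkn hn hMDS S (by omega)).mpr hmem
  unfold alphaCount
  rw [Nat.card_congr (Equiv.subtypeEquivRight key), Nat.card_eq_fintype_card,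
    Fintype.card_subtype]
  have hbij : (Finset.univ.filter fun S : Finset (Fin n) =>
        S.card = s ∧ (⟨0, hn⟩ : Fin n) ∈ S).card =
      ((Finset.univ.erase (⟨0, hn⟩ : Fin n)).powersetCard (s - 1)).card := by
    refine Finset.card_nbij' (fun S => S.erase ⟨0, hn⟩) (fun T => insert ⟨0, hn⟩ T)
      ?_ ?_ ?_ ?_
    · intro S hS
      simp only [Finset.mem_coe, Finset.mem_filter, Finset.mem_univ, true_and] at hS
      rw [Finset.mem_coe, Finset.mem_powersetCard]
      exact ⟨Finset.erase_subset_erase _ (Finset.subset_univ S),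
        by rw [Finset.card_erase_of_mem hS.2, hS.1]⟩
    · intro T hT
      rw [Finset.mem_coe, Finset.mem_powersetCard] at hT
      have hj0 : (⟨0, hn⟩ : Fin n) ∉ T := fun h =>
        Finset.notMem_erase _ _ (hT.1 h)
      simp only [Finset.mem_coe, Finset.mem_filter, Finset.mem_univ, true_and]
      rw [Finset.card_insert_of_notMem hj0, hT.2]
      exact ⟨by omega, Finset.mem_insert_self _ _⟩
    · intro S hS
      simp only [Finset.mem_coe, Finset.mem_filter, Finset.mem_univ, true_and] at hS
      exact Finset.insert_erase hS.2
    · intro T hT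
      rw [Finset.mem_coe, Finset.mem_powersetCard] at hT
      exact Finset.erase_insert fun h => Finset.notMem_erase _ _ (hT.1 h)
  rw [hbij, Finset.card_powersetCard, Finset.card_erase_of_mem (Finset.mem_univ _),
    Finset.card_univ, Fintype.card_fin]

lemma harm_succ (m : ℕ) : harm (m + 1) = harm m + 1 / ((m : ℝ) + 1) :=
  Finset.sum_range_succ _ m

lemma ident (n k : ℕ) (hk : 1 ≤ k) : k ≤ n →
    (n : ℝ) * (harm n - harm (n - k)) -
      ∑ s ∈ Finset.Icc 1 (k - 1), (s : ℝ) / ((n : ℝ) - (s : ℝ)) = (k : ℝ) := by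
  induction k, hk using Nat.le_induction with
  | base =>
    intro hn1
    have hn : 0 < n := hn1
    rw [show (1 : ℕ) - 1 = 0 from rfl, Finset.Icc_eq_empty (by omega), Finset.sum_empty]
    have he : n = (n - 1) + 1 := by omega
    have hh : harm n = harm (n - 1) + 1 / (((n - 1 : ℕ) : ℝ) + 1) := by
      conv_lhs => rw [he]
      rw [harm_succ]
    have hc : (((n - 1 : ℕ)) : ℝ) = (n : ℝ) - 1 := by
      rw [Nat.cast_sub (by omega)]; norm_num
    rw [hh, hc]
    have hn0 : (n : ℝ) ≠ 0 := by positivity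
    rw [sub_add_cancel, add_sub_cancel_left, sub_zero, Nat.cast_one, mul_one_div_cancel hn0]
  | succ p hp ih =>
    intro hpn
    have ihp := ih (by omega)
    have hsum : ∑ s ∈ Finset.Icc 1 ((p + 1) - 1), (s : ℝ) / ((n : ℝ) - (s : ℝ)) =
        ∑ s ∈ Finset.Icc 1 (p - 1), (s : ℝ) / ((n : ℝ) - (s : ℝ)) +
          (p : ℝ) / ((n : ℝ) - (p : ℝ)) := by
      rw [show (p + 1) - 1 = (p - 1) + 1 by omega, Finset.sum_Icc_succ_top (by omega)]
      rw [show (p - 1) + 1 = p by omega]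
    have he : n - p = (n - (p + 1)) + 1 := by omega
    have hh : harm (n - p) = harm (n - (p + 1)) + 1 / (((n - (p + 1) : ℕ) : ℝ) + 1) := by
      rw [he, harm_succ]
    have hc : (((n - (p + 1) : ℕ)) : ℝ) = (n : ℝ) - (p : ℝ) - 1 := by
      rw [Nat.cast_sub (by omega)]; push_cast; ring
    have hC : (n : ℝ) - (p : ℝ) ≠ 0 := by
      have : (p : ℝ) < (n : ℝ) := by exact_mod_cast (by omega : p < n)
      intro h; linarith
    rw [hsum]
    rw [hh, hc] at ihp
    push_cast
    push_cast at ihp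
    have expand : (n : ℝ) * (harm n - harm (n - (p + 1))) -
        (∑ s ∈ Finset.Icc 1 (p - 1), (s : ℝ) / ((n : ℝ) - (s : ℝ)) +
          (p : ℝ) / ((n : ℝ) - (p : ℝ))) =
        ((n : ℝ) * (harm n - (harm (n - (p + 1)) + 1 / ((n : ℝ) - (p : ℝ) - 1 + 1))) -
          ∑ s ∈ Finset.Icc 1 (p - 1), (s : ℝ) / ((n : ℝ) - (s : ℝ))) +
          ((n : ℝ) - (p : ℝ)) / ((n : ℝ) - (p : ℝ)) := by
      rw [show (n : ℝ) - (p : ℝ) - 1 + 1 = (n : ℝ) - (p : ℝ) by ring]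
      field_simp
      ring
    rw [expand, ihp, div_self hC]

lemma ratio_low (n s : ℕ) (hs1 : 1 ≤ s) (hsn : s ≤ n - 1) (hn : 1 ≤ n) :
    (((n - 1).choose (s - 1) : ℕ) : ℝ) / (((n - 1).choose s : ℕ) : ℝ) =
      (s : ℝ) / ((n : ℝ) - (s : ℝ)) := by
  have hb : (((n - 1).choose s : ℕ) : ℝ) ≠ 0 :=
    Nat.cast_ne_zero.mpr (Nat.choose_pos hsn).ne'
  have hsr : (s : ℝ) < n := by exact_mod_cast (by omega : s < n)
  have hd : (n : ℝ) - (s : ℝ) ≠ 0 := by intro h; linarith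
  have hnat : (n - 1).choose s * s = (n - 1).choose (s - 1) * (n - s) := by
    have h := Nat.choose_succ_right_eq (n - 1) (s - 1)
    rwa [show (s - 1) + 1 = s by omega, show (n - 1) - (s - 1) = n - s by omega] at h
  rw [div_eq_div_iff hb hd]
  have hc := congrArg (Nat.cast : ℕ → ℝ) hnat
  push_cast [Nat.cast_sub (show s ≤ n by omega)] at hc
  linarith

lemma ratio_high (n s : ℕ) (hsn : s ≤ n - 1) (hn : 1 ≤ n) :
    ((n.choose s : ℕ) : ℝ) / (((n - 1).choose s : ℕ) : ℝ) =
      (n : ℝ) / ((n : ℝ) - (s : ℝ)) := by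
  have hb : (((n - 1).choose s : ℕ) : ℝ) ≠ 0 :=
    Nat.cast_ne_zero.mpr (Nat.choose_pos hsn).ne'
  have hsr : (s : ℝ) < n := by exact_mod_cast (by omega : s < n)
  have hd : (n : ℝ) - (s : ℝ) ≠ 0 := by intro h; linarith
  have hnat : n * (n - 1).choose s = n.choose s * (n - s) := by
    have h1 := Nat.add_one_mul_choose_eq (n - 1) s
    rw [show n - 1 + 1 = n by omega] at h1
    rw [Nat.choose_succ_right_eq n s] at h1
    exact h1
  rw [div_eq_div_iff hb hd]
  have hc := congrArg (Nat.cast : ℕ → ℝ) hnat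
  push_cast [Nat.cast_sub (show s ≤ n by omega)] at hc
  linarith

lemma sum_harm (n k : ℕ) (hk : 1 ≤ k) (hkn : k ≤ n) :
    ∑ s ∈ Finset.Ioc (k - 1) (n - 1), (n : ℝ) / ((n : ℝ) - (s : ℝ)) =
      (n : ℝ) * harm (n - k) := by
  rw [harm, Finset.mul_sum]
  refine Finset.sum_nbij' (fun s => n - 1 - s) (fun i => n - 1 - i) ?_ ?_ ?_ ?_ ?_
  · intro s hs; simp only [Finset.mem_Ioc] at hs; simp only [Finset.mem_range]; omega
  · intro i hi; simp only [Finset.mem_range] at hi; simp only [Finset.mem_Ioc]; omega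
  · intro s hs; simp only [Finset.mem_Ioc] at hs
    show n - 1 - (n - 1 - s) = s; omega
  · intro i hi; simp only [Finset.mem_range] at hi
    show n - 1 - (n - 1 - i) = i; omega
  · intro s hs
    simp only [Finset.mem_Ioc] at hs
    have h1 : ((n - 1 - s : ℕ) : ℝ) = (n : ℝ) - 1 - s := by
      rw [Nat.cast_sub (by omega), Nat.cast_sub (by omega)]; push_cast; ring
    rw [h1, show (n : ℝ) - 1 - (s : ℝ) + 1 = (n : ℝ) - s by ring, mul_one_div]


/-- For a systematic `[n,k]` MDS code with `s₁ = 1`, the single-symbol file satisfies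
`E₁(G) = k` independently of `n`; equivalently
`n·(H_n − H_{n−k}) − ∑_{s=1}^{k−1} s/(n−s) = k`. -/
theorem stmt16 (q k n : ℕ) (hq : IsPrimePow q)
    (F : Type*) [Field F] [Fintype F] (hF : Fintype.card F = q)
    (hk2 : 2 ≤ k) (hkn : k ≤ n)
    (G : Matrix (Fin k) (Fin n) F)
    (hsys : ∀ (i : Fin k) (j : Fin n), (j : ℕ) < k →
      G i j = if (i : ℕ) = (j : ℕ) then 1 else 0)
    (hMDS : ∀ S : Finset (Fin n), S.card = k →
      LinearIndependent F (fun j : {x : Fin n // x ∈ S} => fun i => G i j.1)) :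
    Etime F G (file1 F k 1) = (k : ℝ) ∧
      (n : ℝ) * (harm n - harm (n - k)) -
          ∑ s ∈ Finset.Icc 1 (k - 1), (s : ℝ) / ((n : ℝ) - (s : ℝ)) =
        (k : ℝ) := by
  have hident := ident n k (by omega) hkn
  refine ⟨?_, hident⟩
  rw [Etime]
  rw [show Finset.Icc 1 (n - 1) = Finset.Ioc 0 (n - 1) by rw [← Finset.Icc_add_one_left_eq_Ioc, zero_add]]
  rw [← Finset.sum_Ioc_consecutive _ (show (0 : ℕ) ≤ k - 1 by omega)
    (show k - 1 ≤ n - 1 by omega)]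
  have hlow : ∑ s ∈ Finset.Ioc 0 (k - 1),
      (alphaCount F G (file1 F k 1) s : ℝ) / ((n - 1).choose s : ℝ) =
      ∑ s ∈ Finset.Ioc 0 (k - 1), (s : ℝ) / ((n : ℝ) - (s : ℝ)) := by
    refine Finset.sum_congr rfl fun s hs => ?_
    simp only [Finset.mem_Ioc] at hs
    rw [alpha_low G hk2 hkn hsys hMDS s (by omega) (by omega),
      ratio_low n s (by omega) (by omega) (by omega)]
  have hhigh : ∑ s ∈ Finset.Ioc (k - 1) (n - 1),
      (alphaCount F G (file1 F k 1) s : ℝ) / ((n - 1).choose s : ℝ) =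
      ∑ s ∈ Finset.Ioc (k - 1) (n - 1), (n : ℝ) / ((n : ℝ) - (s : ℝ)) := by
    refine Finset.sum_congr rfl fun s hs => ?_
    simp only [Finset.mem_Ioc] at hs
    rw [alpha_high G (by omega) hMDS s (by omega),
      ratio_high n s (by omega) (by omega)]
  rw [hlow, hhigh, sum_harm n k (by omega) hkn,
    show Finset.Ioc 0 (k - 1) = Finset.Icc 1 (k - 1) by rw [← Finset.Icc_add_one_left_eq_Ioc, zero_add]]
  linarith
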